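/- Policy iteration convergence with explicit iteration count (Theorem 5.3): consider a finite MDP with discount factor γ ∈ (0, 1/3), a sequence of deterministic policies π_0, π_1, …, π_K such that for each k < K there is Q̂^{π_k} : S × A → ℝ with ‖Q̂^{π_k} − Q^{π_k}‖∞ ≤ ε (ε > 0) and π_{k+1}(s) maximizes Q̂^{π_k}(s, ·) for every state s. Set Δ_0 = ‖V* − V^{π_0}‖∞ and suppose Δ_0 > 0. If K ≥ log(Δ_0 (1 − 3γ) / (2ε)) / log((1 − γ)/(2γ)), then ‖V* − V^{π_K}‖∞ ≤ 4ε/(1 − 3γ). -/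

import Mathlib

/-- The policy Bellman operator `(T_π V)(s) = r(s,π(s)) + γ ∑_{s'} P(s'|s,π(s)) V(s')`. -/
noncomputable def bellmanPol {S A : Type*} [Fintype S] (P : S → A → S → ℝ)
    (r : S → A → ℝ) (γ : ℝ) (π : S → A) (V : S → ℝ) : S → ℝ :=
  fun s => r s (π s) + γ * ∑ s', P s (π s) s' * V s'

/-- The optimal Bellman operator
`(T V)(s) = max_{a∈A} [ r(s,a) + γ ∑_{s'} P(s'|s,a) V(s') ]`. -/
noncomputable def bellmanOpt {S A : Type*} [Fintype S] [Fintype A] [Nonempty A]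
    (P : S → A → S → ℝ) (r : S → A → ℝ) (γ : ℝ) (V : S → ℝ) : S → ℝ :=
  fun s => Finset.univ.sup' Finset.univ_nonempty
    (fun a => r s a + γ * ∑ s', P s a s' * V s')

/-- The action-value function `Q(s,a) = r(s,a) + γ ∑_{s'} P(s'|s,a) V(s')`. -/
noncomputable def qFun {S A : Type*} [Fintype S] (P : S → A → S → ℝ)
    (r : S → A → ℝ) (γ : ℝ) (V : S → ℝ) (s : S) (a : A) : ℝ :=
  r s a + γ * ∑ s', P s a s' * V s'

lemma sum_diff_bound' {S A : Type*} [Fintype S] [Nonempty S]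
    (P : S → A → S → ℝ) (hP0 : ∀ s a s', 0 ≤ P s a s')
    (hP1 : ∀ s a, ∑ s', P s a s' = 1) (V W : S → ℝ) (s : S) (a : A) :
    |∑ s', P s a s' * V s' - ∑ s', P s a s' * W s'| ≤ ‖V - W‖ := by
  rw [← Finset.sum_sub_distrib]
  calc |∑ s', (P s a s' * V s' - P s a s' * W s')|
      ≤ ∑ s', |P s a s' * V s' - P s a s' * W s'| := Finset.abs_sum_le_sum_abs _ _
    _ = ∑ s', P s a s' * |V s' - W s'| := by
        refine Finset.sum_congr rfl fun s' _ => ?_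
        rw [← mul_sub, abs_mul, abs_of_nonneg (hP0 s a s')]
    _ ≤ ∑ s', P s a s' * ‖V - W‖ := by
        refine Finset.sum_le_sum fun s' _ => mul_le_mul_of_nonneg_left ?_ (hP0 s a s')
        simpa [Real.norm_eq_abs] using norm_le_pi_norm (V - W) s'
    _ = ‖V - W‖ := by rw [← Finset.sum_mul, hP1, one_mul]

/-- monotone-style bound on weighted sum from below by the min gap -/
lemma vpi_le_vstar' {S A : Type*} [Fintype S] [Nonempty S] [Fintype A] [Nonempty A]
    (P : S → A → S → ℝ) (hP0 : ∀ s a s', 0 ≤ P s a s')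
    (hP1 : ∀ s a, ∑ s', P s a s' = 1)
    (r : S → A → ℝ) (γ : ℝ) (hγ0 : 0 ≤ γ) (hγ1 : γ < 1)
    (π : S → A) (Vpi Vstar : S → ℝ)
    (hVpi : ∀ s, Vpi s = bellmanPol P r γ π Vpi s)
    (hVstar : ∀ s, Vstar s = bellmanOpt P r γ Vstar s) :
    ∀ s, Vpi s ≤ Vstar s := by
  obtain ⟨s0, -, hs0⟩ := Finset.exists_min_image Finset.univ (fun s => Vstar s - Vpi s)
    ⟨Classical.arbitrary S, Finset.mem_univ _⟩
  have hs0' : ∀ s, Vstar s0 - Vpi s0 ≤ Vstar s - Vpi s := fun s => hs0 s (Finset.mem_univ s)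
  have h1 : Vpi s0 = r s0 (π s0) + γ * ∑ s', P s0 (π s0) s' * Vpi s' := hVpi s0
  have h2 : r s0 (π s0) + γ * ∑ s', P s0 (π s0) s' * Vstar s' ≤ Vstar s0 := by
    rw [hVstar s0]
    exact Finset.le_sup' (fun a => r s0 a + γ * ∑ s', P s0 a s' * Vstar s')
      (Finset.mem_univ (π s0))
  have h3 : Vstar s0 - Vpi s0 ≤
      ∑ s', P s0 (π s0) s' * Vstar s' - ∑ s', P s0 (π s0) s' * Vpi s' := by
    rw [← Finset.sum_sub_distrib]
    calc Vstar s0 - Vpi s0 = ∑ s', P s0 (π s0) s' * (Vstar s0 - Vpi s0) := by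
          rw [← Finset.sum_mul, hP1, one_mul]
      _ ≤ ∑ s', P s0 (π s0) s' * (Vstar s' - Vpi s') :=
          Finset.sum_le_sum fun s' _ =>
            mul_le_mul_of_nonneg_left (hs0' s') (hP0 s0 (π s0) s')
      _ = ∑ s', (P s0 (π s0) s' * Vstar s' - P s0 (π s0) s' * Vpi s') := by
          simp [mul_sub]
  have key : γ * (Vstar s0 - Vpi s0) ≤ Vstar s0 - Vpi s0 := by nlinarith
  have hm : 0 ≤ Vstar s0 - Vpi s0 := by nlinarith
  intro s
  have := hs0' s
  linarith

/-- Policy iteration convergence with explicit iteration count: for `γ ∈ (0,1/3)`,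
`ε > 0`, `Δ_0 = ‖V* − V^{π_0}‖∞ > 0`, and
`K ≥ log(Δ_0 (1 − 3γ)/(2ε)) / log((1 − γ)/(2γ))`, the final policy satisfies
`‖V* − V^{π_K}‖∞ ≤ 4ε/(1 − 3γ)`. -/
theorem policy_iteration_iteration_count
    {S A : Type*} [Fintype S] [Nonempty S] [Fintype A] [Nonempty A]
    (P : S → A → S → ℝ)
    (hP0 : ∀ s a s', 0 ≤ P s a s')
    (hP1 : ∀ s a, ∑ s', P s a s' = 1)
    (r : S → A → ℝ) (γ : ℝ) (hγ0 : 0 < γ) (hγ : γ < 1 / 3)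
    (ε : ℝ) (hε : 0 < ε) (K : ℕ)
    (π : ℕ → S → A) (Vpi : ℕ → S → ℝ) (Vstar : S → ℝ)
    (hVpi : ∀ k s, Vpi k s = bellmanPol P r γ (π k) (Vpi k) s)
    (hVstar : ∀ s, Vstar s = bellmanOpt P r γ Vstar s)
    (himp : ∀ k < K, ∃ Qh : S → A → ℝ,
      ‖(fun p : S × A => Qh p.1 p.2) -
        (fun p : S × A => qFun P r γ (Vpi k) p.1 p.2)‖ ≤ ε ∧
      ∀ s, Qh s (π (k + 1) s) = Finset.univ.sup' Finset.univ_nonempty (fun a => Qh s a))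
    (hΔ0 : 0 < ‖Vstar - Vpi 0‖)
    (hK : (K : ℝ) ≥
      Real.log (‖Vstar - Vpi 0‖ * (1 - 3 * γ) / (2 * ε)) / Real.log ((1 - γ) / (2 * γ))) :
    ‖Vstar - Vpi K‖ ≤ 4 * ε / (1 - 3 * γ) := by
  have hγ1 : γ < 1 := by linarith
  have h1γ : (0:ℝ) < 1 - γ := by linarith
  have h3γ : (0:ℝ) < 1 - 3 * γ := by linarith
  set Δ : ℕ → ℝ := fun k => ‖Vstar - Vpi k‖ with hΔdef
  set β : ℝ := 2 * γ / (1 - γ) with hβdef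
  set E : ℝ := 2 * ε / (1 - 3 * γ) with hEdef
  have hβ0 : 0 < β := by positivity
  have hβ1 : β < 1 := by rw [hβdef, div_lt_one h1γ]; linarith
  have hE0 : 0 < E := by positivity
  -- nonnegativity of Vstar - Vpi k
  have hnn : ∀ k s, Vpi k s ≤ Vstar s := fun k =>
    vpi_le_vstar' P hP0 hP1 r γ hγ0.le hγ1 (π k) (Vpi k) Vstar (hVpi k) hVstar
  -- one-step recursion
  have hstep : ∀ k < K, Δ (k+1) ≤ β * Δ k + 2 * ε / (1 - γ) := by
    intro k hk
    obtain ⟨Qh, hQh, hQmax⟩ := himp k hk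
    have hQent : ∀ s a, |Qh s a - qFun P r γ (Vpi k) s a| ≤ ε := by
      intro s a
      have := norm_le_pi_norm ((fun p : S × A => Qh p.1 p.2) -
        (fun p : S × A => qFun P r γ (Vpi k) p.1 p.2)) (s, a)
      simp only [Pi.sub_apply, Real.norm_eq_abs] at this
      exact this.trans hQh
    -- greedy within 2ε
    have hgreedy : ∀ s a, qFun P r γ (Vpi k) s a - 2 * ε ≤
        qFun P r γ (Vpi k) s (π (k+1) s) := by
      intro s a
      have h1 := hQent s a
      have h2 := hQent s (π (k+1) s)
      have h3 : Qh s a ≤ Qh s (π (k+1) s) := by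
        rw [hQmax s]; exact Finset.le_sup' (fun a => Qh s a) (Finset.mem_univ a)
      rw [abs_le] at h1 h2
      linarith [h1.1, h1.2, h2.1, h2.2]
    -- pointwise bound
    have hpt : ∀ s, Vstar s - Vpi (k+1) s ≤ 2 * γ * Δ k + 2 * ε + γ * Δ (k+1) := by
      intro s
      set π' := π (k+1)
      -- A2: T Vstar s ≤ T (Vpi k) s + γ Δ k
      have hA2 : Vstar s ≤ bellmanOpt P r γ (Vpi k) s + γ * Δ k := by
        rw [hVstar s, bellmanOpt]
        apply Finset.sup'_le
        intro a _
        have hb := sum_diff_bound' P hP0 hP1 Vstar (Vpi k) s a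
        rw [abs_le] at hb
        have : r s a + γ * ∑ s', P s a s' * Vstar s' ≤
            (r s a + γ * ∑ s', P s a s' * Vpi k s') + γ * Δ k := by
          have := hb.1
          nlinarith [hγ0.le]
        refine this.trans ?_
        have : r s a + γ * ∑ s', P s a s' * Vpi k s' ≤ bellmanOpt P r γ (Vpi k) s :=
          Finset.le_sup' (fun a => r s a + γ * ∑ s', P s a s' * Vpi k s') (Finset.mem_univ a)
        linarith
      -- A3: T (Vpi k) s ≤ qFun (Vpi k) s (π' s) + 2ε
      have hA3 : bellmanOpt P r γ (Vpi k) s ≤ qFun P r γ (Vpi k) s (π' s) + 2 * ε := by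
        apply Finset.sup'_le
        intro a _
        have := hgreedy s a
        simp only [qFun] at this ⊢
        linarith
      -- A4+A5: qFun (Vpi k) s (π' s) ≤ Vpi (k+1) s + γ ‖Vpi k - Vpi (k+1)‖
      have hA6 : ‖Vpi k - Vpi (k+1)‖ ≤ Δ k + Δ (k+1) := by
        have : Vpi k - Vpi (k+1) = -(Vstar - Vpi k) + (Vstar - Vpi (k+1)) := by
          ext s'; simp only [Pi.sub_apply, Pi.neg_apply, Pi.add_apply]; ring
        rw [this]
        refine (norm_add_le _ _).trans ?_
        rw [norm_neg]
      have hA4 : qFun P r γ (Vpi k) s (π' s) ≤ Vpi (k+1) s + γ * (Δ k + Δ (k+1)) := by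
        have hb := sum_diff_bound' P hP0 hP1 (Vpi k) (Vpi (k+1)) s (π' s)
        rw [abs_le] at hb
        have hfix : Vpi (k+1) s = r s (π' s) + γ * ∑ s', P s (π' s) s' * Vpi (k+1) s' :=
          hVpi (k+1) s
        rw [qFun]
        nlinarith [hb.1, hb.2, hγ0.le, hA6]
      linarith
    -- norm bound
    have hbd0 : 0 ≤ 2 * γ * Δ k + 2 * ε + γ * Δ (k+1) := by positivity
    have hnorm : Δ (k+1) ≤ 2 * γ * Δ k + 2 * ε + γ * Δ (k+1) := by
      rw [hΔdef]
      rw [pi_norm_le_iff_of_nonneg hbd0]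
      intro s
      rw [Pi.sub_apply, Real.norm_eq_abs, abs_of_nonneg (by linarith [hnn (k+1) s])]
      exact hpt s
    -- solve for Δ (k+1)
    rw [hβdef, div_mul_eq_mul_div, ← add_div, le_div_iff₀ h1γ]
    nlinarith [hnorm]
  -- induction : Δ k ≤ β^k Δ 0 + E
  have hΔnn : ∀ k, 0 ≤ Δ k := fun k => norm_nonneg _
  have hEc : β * E + 2 * ε / (1 - γ) = E := by
    rw [hβdef, hEdef, div_mul_div_comm, div_add_div _ _ (mul_pos h1γ h3γ).ne' h1γ.ne',
      div_eq_div_iff (mul_pos (mul_pos h1γ h3γ) h1γ).ne' h3γ.ne']; ring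
  have hind : ∀ k, k ≤ K → Δ k ≤ β ^ k * Δ 0 + E := by
    intro k
    induction k with
    | zero => intro _; simp; linarith [hE0]
    | succ n ih =>
      intro hn
      have hnK : n < K := by omega
      have h1 := hstep n hnK
      have h2 := ih (by omega)
      have : Δ (n+1) ≤ β * (β ^ n * Δ 0 + E) + 2 * ε / (1 - γ) := by
        refine h1.trans ?_
        have := mul_le_mul_of_nonneg_left h2 hβ0.le
        linarith
      calc Δ (n+1) ≤ β * (β ^ n * Δ 0 + E) + 2 * ε / (1 - γ) := this
        _ = β ^ (n+1) * Δ 0 + (β * E + 2 * ε / (1 - γ)) := by ring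
        _ = β ^ (n+1) * Δ 0 + E := by rw [hEc]
  -- log bound: β^K * Δ 0 ≤ E
  have hinvβ : (1 - γ) / (2 * γ) = β⁻¹ := by
    rw [hβdef]; field_simp
  have hlogpos : 0 < Real.log ((1 - γ) / (2 * γ)) := by
    apply Real.log_pos
    rw [lt_div_iff₀ (by positivity)]; linarith
  have hL : Real.log (Δ 0 * (1 - 3 * γ) / (2 * ε)) ≤ (K : ℝ) * Real.log ((1 - γ) / (2 * γ)) := by
    rw [ge_iff_le, div_le_iff₀ hlogpos] at hK
    exact hK
  have hargpos : 0 < Δ 0 * (1 - 3 * γ) / (2 * ε) := by positivity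
  have hDE : Δ 0 * (1 - 3 * γ) / (2 * ε) = Δ 0 / E := by
    rw [hEdef]; field_simp
  have hpow : β ^ K * Δ 0 ≤ E := by
    have h1 : (K : ℝ) * Real.log β ≤ - Real.log (Δ 0 / E) := by
      have : Real.log β = - Real.log ((1 - γ) / (2 * γ)) := by
        rw [hinvβ, Real.log_inv, neg_neg]
      rw [this]
      rw [hDE] at hL
      nlinarith [hL]
    have h2 : β ^ K = Real.exp ((K : ℝ) * Real.log β) := by
      rw [← Real.log_pow, Real.exp_log (pow_pos hβ0 K)]
    have h3 : Real.exp ((K : ℝ) * Real.log β) ≤ Real.exp (- Real.log (Δ 0 / E)) :=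
      Real.exp_le_exp.2 h1
    have h4 : Real.exp (- Real.log (Δ 0 / E)) = E / Δ 0 := by
      rw [Real.exp_neg, Real.exp_log (by positivity : (0:ℝ) < Δ 0 / E)]
      rw [inv_div]
    have h5 : β ^ K ≤ E / Δ 0 := by rw [h2]; rw [h4] at h3; exact h3
    calc β ^ K * Δ 0 ≤ E / Δ 0 * Δ 0 := by
          exact mul_le_mul_of_nonneg_right h5 (le_of_lt hΔ0)
      _ = E := div_mul_cancel₀ E hΔ0.ne'
  have hfinal := hind K le_rfl
  have : Δ K ≤ 2 * E := by linarith
  rw [hEdef] at this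
  calc ‖Vstar - Vpi K‖ = Δ K := rfl
    _ ≤ 2 * (2 * ε / (1 - 3 * γ)) := this
    _ = 4 * ε / (1 - 3 * γ) := by ring
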